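/- Let ν be a probability measure on ℝ, p : ℝ → (0,1) measurable with θ = ∫ dν/(1-p) < ∞, and define Q(w;B) = p(w)1_B(w) + (1-p(w))ν(B). Then Q is a Markov transition kernel with stationary distribution dπ = dν/(θ(1-p)), and Q satisfies the reversibility (detailed balance) condition ∫_A Q(w;B)π(dw) = ∫_B Q(w;A)π(dw) for all Borel sets A, B. -/

import Mathlib

open MeasureTheory Filter
open scoped ENNReal

/-- with `Q(w;·) = p(w) δ_w + (1-p(w)) ν` and
`θ = ∫ dν/(1-p) < ∞`, `Q` is a Markov transition kernel with stationary
distribution `dπ = dν/(θ(1-p))`, and satisfies the detailed balance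
(reversibility) condition `∫_A Q(w;B) π(dw) = ∫_B Q(w;A) π(dw)`. -/
theorem mixture_kernel_reversible
    (ν : Measure ℝ) [IsProbabilityMeasure ν]
    (p : ℝ → ℝ) (hp : Measurable p) (hp01 : ∀ w, p w ∈ Set.Ioo (0 : ℝ) 1)
    (θ : ℝ) (hint : Integrable (fun w => (1 - p w)⁻¹) ν)
    (hθ : ∫ w, (1 - p w)⁻¹ ∂ν = θ) :
    let κ : ℝ → Measure ℝ := fun w =>
      ENNReal.ofReal (p w) • Measure.dirac w + ENNReal.ofReal (1 - p w) • ν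
    let π : Measure ℝ := ν.withDensity (fun w => ENNReal.ofReal (θ⁻¹ * (1 - p w)⁻¹))
    (∀ w, κ w Set.univ = 1) ∧
    IsProbabilityMeasure π ∧
    π.bind κ = π ∧
    (∀ A B : Set ℝ, MeasurableSet A → MeasurableSet B →
      ∫⁻ w in A, κ w B ∂π = ∫⁻ w in B, κ w A ∂π) := by
  intro κ π
  have hsub : ∀ w, 0 < 1 - p w := fun w => by have := (hp01 w).2; linarith
  have hppos : ∀ w, 0 < p w := fun w => (hp01 w).1
  have hθ1 : (1:ℝ) ≤ θ := by
    rw [← hθ]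
    calc (1:ℝ) = ∫ _, (1:ℝ) ∂ν := by simp
    _ ≤ _ := integral_mono (integrable_const 1) hint
        (fun w => (one_le_inv₀ (hsub w)).mpr (by have := (hp01 w).1; linarith))
  have hθpos : (0:ℝ) < θ := by linarith
  have hf : Measurable fun w => ENNReal.ofReal (θ⁻¹ * (1 - p w)⁻¹) :=
    (measurable_const.mul ((measurable_const.sub hp).inv)).ennreal_ofReal
  -- κ applied to a measurable set
  have hκ_apply : ∀ w {s : Set ℝ}, MeasurableSet s →
      κ w s = ENNReal.ofReal (p w) * s.indicator 1 w + ENNReal.ofReal (1 - p w) * ν s := by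
    intro w s hs
    simp [κ, Measure.dirac_apply' _ hs, smul_eq_mul]
  -- integrals against π rewritten as integrals against ν
  have hsetint : ∀ (g : ℝ → ℝ≥0∞), Measurable g → ∀ {A : Set ℝ}, MeasurableSet A →
      ∫⁻ w in A, g w ∂π = ∫⁻ w in A, ENNReal.ofReal (θ⁻¹ * (1 - p w)⁻¹) * g w ∂ν := by
    intro g hg A hA
    show ∫⁻ w, g w ∂(π.restrict A) = _
    rw [show π.restrict A = (ν.restrict A).withDensity
        (fun w => ENNReal.ofReal (θ⁻¹ * (1 - p w)⁻¹)) from restrict_withDensity hA _,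
      lintegral_withDensity_eq_lintegral_mul _ hf hg]
    rfl
  -- claim 1 : ∫_A (1-p) dπ = θ⁻¹ ν A
  have claim1 : ∀ {A : Set ℝ}, MeasurableSet A →
      ∫⁻ w in A, ENNReal.ofReal (1 - p w) ∂π = ENNReal.ofReal θ⁻¹ * ν A := by
    intro A hA
    rw [hsetint _ ((hp.const_sub 1).ennreal_ofReal) hA]
    have h1 : ∀ w, ENNReal.ofReal (θ⁻¹ * (1 - p w)⁻¹) * ENNReal.ofReal (1 - p w)
        = ENNReal.ofReal θ⁻¹ := by
      intro w
      have h0 := hθpos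
      have h1 := hsub w
      rw [← ENNReal.ofReal_mul (by positivity)]
      congr 1
      field_simp
    simp_rw [h1]
    simp [setLIntegral_const]
  -- the main set-integral computation
  have main : ∀ {A B : Set ℝ}, MeasurableSet A → MeasurableSet B →
      ∫⁻ w in A, κ w B ∂π
        = (∫⁻ w in B ∩ A, ENNReal.ofReal (p w) ∂π) + ENNReal.ofReal θ⁻¹ * ν A * ν B := by
    intro A B hA hB
    have h1 : ∀ w, κ w B
        = B.indicator (fun w => ENNReal.ofReal (p w)) w + ENNReal.ofReal (1 - p w) * ν B := by
      intro w
      rw [hκ_apply w hB]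
      congr 1
      by_cases h : w ∈ B <;> simp [h]
    simp_rw [h1]
    rw [lintegral_add_left ((hp.ennreal_ofReal).indicator hB)]
    congr 1
    · rw [lintegral_indicator hB, Measure.restrict_restrict hB]
    · rw [lintegral_mul_const _ ((hp.const_sub 1).ennreal_ofReal),
        claim1 hA]
  -- measurability of κ
  have hκmeas : Measurable κ := by
    apply Measure.measurable_of_measurable_coe
    intro s hs
    simp_rw [fun w => hκ_apply w hs]
    exact ((hp.ennreal_ofReal).mul (measurable_one.indicator hs)).add
      (((measurable_const.sub hp).ennreal_ofReal).mul_const _)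
  -- π is a probability measure
  have hθint : ∫⁻ w, ENNReal.ofReal ((1 - p w)⁻¹) ∂ν = ENNReal.ofReal θ := by
    rw [← hθ]
    exact (ofReal_integral_eq_lintegral_ofReal hint
      (ae_of_all _ fun w => (inv_pos.mpr (hsub w)).le)).symm
  have hπuniv : π Set.univ = 1 := by
    show ν.withDensity _ Set.univ = 1
    rw [withDensity_apply _ MeasurableSet.univ, Measure.restrict_univ]
    simp_rw [ENNReal.ofReal_mul (le_of_lt (inv_pos.mpr hθpos))]
    rw [lintegral_const_mul _ ((show Measurable fun w => (1 - p w)⁻¹ from (hp.const_sub 1).inv).ennreal_ofReal),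
      hθint, ← ENNReal.ofReal_mul (le_of_lt (inv_pos.mpr hθpos)),
      inv_mul_cancel₀ hθpos.ne', ENNReal.ofReal_one]
  refine ⟨?_, ⟨hπuniv⟩, ?_, ?_⟩
  · intro w
    rw [hκ_apply w MeasurableSet.univ]
    have h1 : (1:ℝ≥0∞) = ENNReal.ofReal (p w + (1 - p w)) := by
      rw [show p w + (1 - p w) = 1 by ring, ENNReal.ofReal_one]
    simp only [Set.indicator_of_mem (Set.mem_univ w), Pi.one_apply, mul_one,
      measure_univ, mul_one]
    rw [h1, ENNReal.ofReal_add (hppos w).le (hsub w).le]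
  · ext s hs
    rw [Measure.bind_apply hs hκmeas.aemeasurable]
    have h1 : ∫⁻ w, κ w s ∂π = ∫⁻ w in Set.univ, κ w s ∂π := by
      rw [Measure.restrict_univ]
    rw [h1, main MeasurableSet.univ hs, Set.inter_univ, measure_univ, mul_one]
    rw [hsetint _ (hp.ennreal_ofReal) hs]
    show _ = ν.withDensity _ s
    rw [withDensity_apply _ hs]
    have h2 : ∀ w, ENNReal.ofReal (θ⁻¹ * (1 - p w)⁻¹)
        = ENNReal.ofReal (θ⁻¹ * (1 - p w)⁻¹) * ENNReal.ofReal (p w) + ENNReal.ofReal θ⁻¹ := by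
      intro w
      have h0 := hθpos
      have h1 := hsub w
      rw [← ENNReal.ofReal_mul (by positivity), ← ENNReal.ofReal_add
        (mul_nonneg (by positivity) (hppos w).le) (le_of_lt (inv_pos.mpr hθpos))]
      congr 1
      field_simp
      ring
    have h3 : ∫⁻ w in s, ENNReal.ofReal (θ⁻¹ * (1 - p w)⁻¹) ∂ν
        = ∫⁻ w in s, (ENNReal.ofReal (θ⁻¹ * (1 - p w)⁻¹) * ENNReal.ofReal (p w)
            + ENNReal.ofReal θ⁻¹) ∂ν := lintegral_congr fun w => h2 w
    rw [h3, lintegral_add_right _ measurable_const, setLIntegral_const]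
  · intro A B hA hB
    rw [main hA hB, main hB hA, Set.inter_comm]
    ring_nf
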